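/- Let (G, ψ) be a vertex-weighted graph over subsets of a field K with weighted elimination ordering (v₁, …, v_ℓ), and let C_{≥k} be as above. If s ∈ C_{≥k}, then ψ(v_s) ⊆ ψ(v_k). -/

import Mathlib

variable {ℓ : ℕ} {K : Type*} [Field K]

/-- `C_{≥k}`: the set containing `k` and all `i > k` reachable from `k` by a path whose
intermediate vertices have strictly increasing indices, all strictly between `k` and `i`. -/
def Cge (G : SimpleGraph (Fin ℓ)) (k : Fin ℓ) : Set (Fin ℓ) :=
  {i | i = k ∨ (k < i ∧ ∃ l : List (Fin ℓ),
    List.Chain G.Adj k (l ++ [i]) ∧ List.Chain' (· < ·) l ∧ ∀ j ∈ l, k < j ∧ j < i)}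

private lemma aux10 (G : SimpleGraph (Fin ℓ)) (ψ : Fin ℓ → Finset K)
    (hdec : ∀ i j : Fin ℓ, i < j → G.Adj i j → ψ j ⊆ ψ i) :
    ∀ (l : List (Fin ℓ)) (a b : Fin ℓ), a < b → List.Chain G.Adj a (l ++ [b]) →
      List.Chain' (· < ·) l → (∀ j ∈ l, a < j ∧ j < b) → ψ b ⊆ ψ a := by
  intro l
  induction l with
  | nil =>
    intro a b hab hc _ _
    simp only [List.nil_append, List.Chain, List.chain_cons, List.isChain_cons_cons] at hc
    exact hdec a b hab hc.1
  | cons c l' ih =>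
    intro a b hab hc hch hmem
    simp only [List.cons_append, List.Chain, List.chain_cons, List.isChain_cons_cons] at hc
    obtain ⟨hac, hrest⟩ := hc
    have hcb : c < b := (hmem c (by simp)).2
    have hac' : a < c := (hmem c (by simp)).1
    have hpw : List.Pairwise (· < ·) (c :: l') :=
      List.isChain_iff_pairwise.mp hch
    refine (ih c b hcb hrest (hpw.tail.isChain) ?_).trans (hdec a c hac' hac)
    intro j hj
    exact ⟨List.rel_of_pairwise_cons hpw hj, (hmem j (by simp [hj])).2⟩

theorem stmt10 (G : SimpleGraph (Fin ℓ)) (ψ : Fin ℓ → Finset K)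
    (hpeo : ∀ t a b : Fin ℓ, a < t → b < t → a ≠ b → G.Adj a t → G.Adj b t → G.Adj a b)
    (hdec : ∀ i j : Fin ℓ, i < j → G.Adj i j → ψ j ⊆ ψ i)
    (k s : Fin ℓ) (hs : s ∈ Cge G k) : ψ s ⊆ ψ k := by
  rcases hs with h | ⟨hks, l, hc, hch, hmem⟩
  · subst h; rfl
  · exact aux10 G ψ hdec l k s hks hc hch hmem
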